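/- Every balanced representation X of the generalized subspace quiver Γ is θ-semistable for the stability parameter θ with θ_{v₀} = -m and θ_{v_{ij}} = w_{ij}; that is, θ(dim X) = 0 and θ(dim Y) ≤ 0 for every subrepresentation Y of X. -/
import Mathlib


open Finset Module

/-- A representation of the generalized subspace quiver is balanced if for every cluster `i`
the combined map `Ψ(X,i)` is bijective. -/
def IsBalancedRep (K : Type*) [Field K] {m : ℕ} {r : Fin m → ℕ} (w : ∀ i, Fin (r i) → ℕ)
    {X0 : Type*} [AddCommGroup X0] [Module K X0]
    {X : ∀ i, Fin (r i) → Type*} [∀ i j, AddCommGroup (X i j)] [∀ i j, Module K (X i j)]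
    (f : ∀ i j, Fin (w i j) → (X i j →ₗ[K] X0)) : Prop :=
  ∀ i, Function.Bijective
    (fun g : (j : Fin (r i)) → Fin (w i j) → X i j => ∑ j, ∑ k, f i j k (g j k))

/-- The combined map `Ψ(X,i)` as a linear map. -/
def PsiMap (K : Type*) [Field K] {m : ℕ} {r : Fin m → ℕ} (w : ∀ i, Fin (r i) → ℕ)
    {X0 : Type*} [AddCommGroup X0] [Module K X0]
    {X : ∀ i, Fin (r i) → Type*} [∀ i j, AddCommGroup (X i j)] [∀ i j, Module K (X i j)]
    (f : ∀ i j, Fin (w i j) → (X i j →ₗ[K] X0)) (i : Fin m) :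
    ((j : Fin (r i)) → Fin (w i j) → X i j) →ₗ[K] X0 where
  toFun g := ∑ j, ∑ k, f i j k (g j k)
  map_add' g h := by simp [Finset.sum_add_distrib]
  map_smul' c g := by simp [Finset.smul_sum]

theorem psi_dim_eq (K : Type*) [Field K] {m : ℕ} {r : Fin m → ℕ} (w : ∀ i, Fin (r i) → ℕ)
    {X0 : Type*} [AddCommGroup X0] [Module K X0] [FiniteDimensional K X0]
    {X : ∀ i, Fin (r i) → Type*} [∀ i j, AddCommGroup (X i j)] [∀ i j, Module K (X i j)]
    [∀ i j, FiniteDimensional K (X i j)]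
    (f : ∀ i j, Fin (w i j) → (X i j →ₗ[K] X0))
    (hX : IsBalancedRep K w f) (i : Fin m) :
    ∑ j, w i j * finrank K (X i j) = finrank K X0 := by
  have hb : Function.Bijective (PsiMap K w f i) := hX i
  have := (LinearEquiv.ofBijective (PsiMap K w f i) hb).finrank_eq
  rw [← this, Module.finrank_pi_fintype K]
  refine Finset.sum_congr rfl fun j _ => ?_
  rw [Module.finrank_pi_fintype K, Finset.sum_const, Finset.card_univ, Fintype.card_fin,
    smul_eq_mul]

/-- Every balanced representation `X` is `θ`-semistable for
`θ_{v₀} = -m`, `θ_{v_{ij}} = w i j`: we have `θ(dim X) = 0` and `θ(dim Y) ≤ 0` for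
every subrepresentation `Y` of `X`. -/
theorem balanced_is_theta_semistable (K : Type*) [Field K]
    (m : ℕ) (r : Fin m → ℕ) (w : ∀ i, Fin (r i) → ℕ)
    (X0 : Type*) [AddCommGroup X0] [Module K X0] [FiniteDimensional K X0]
    (X : ∀ i, Fin (r i) → Type*) [∀ i j, AddCommGroup (X i j)] [∀ i j, Module K (X i j)]
    [∀ i j, FiniteDimensional K (X i j)]
    (f : ∀ i j, Fin (w i j) → (X i j →ₗ[K] X0))
    (hX : IsBalancedRep K w f) :
    (-(m : ℤ) * (finrank K X0 : ℤ) + ∑ i, ∑ j, (w i j : ℤ) * (finrank K (X i j) : ℤ) = 0) ∧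
    (∀ (Y0 : Submodule K X0) (Y : ∀ i j, Submodule K (X i j)),
      (∀ i j k, ∀ x ∈ Y i j, f i j k x ∈ Y0) →
      -(m : ℤ) * (finrank K Y0 : ℤ) + ∑ i, ∑ j, (w i j : ℤ) * (finrank K (Y i j) : ℤ) ≤ 0) := by
  constructor
  · have h1 : ∀ i, (∑ j, (w i j : ℤ) * (finrank K (X i j) : ℤ)) = (finrank K X0 : ℤ) := by
      intro i
      have := psi_dim_eq K w f hX i
      push_cast [← this]
      ring
    rw [Finset.sum_congr rfl fun i _ => h1 i, Finset.sum_const, Finset.card_univ,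
      Fintype.card_fin, nsmul_eq_mul]
    ring
  · intro Y0 Y hY
    -- restricted linear map on subspaces
    have hineq : ∀ i, ∑ j, w i j * finrank K (Y i j) ≤ finrank K Y0 := by
      intro i
      let G : ((j : Fin (r i)) → Fin (w i j) → Y i j) →ₗ[K] Y0 :=
        { toFun := fun g => ⟨∑ j, ∑ k, f i j k (g j k),
            Submodule.sum_mem _ fun j _ => Submodule.sum_mem _ fun k _ =>
              hY i j k _ (g j k).2⟩
          map_add' := fun g h => by
            ext
            simp [Finset.sum_add_distrib]
          map_smul' := fun c g => by
            ext
            simp [Finset.smul_sum] }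
      have hGinj : Function.Injective G := by
        rw [injective_iff_map_eq_zero]
        intro g hg
        have h0 : (PsiMap K w f i) (fun j k => ((g j k : X i j))) = 0 := by
          have := congrArg (Subtype.val) hg
          simpa [G, PsiMap] using this
        have := (hX i).injective (a₁ := fun j k => ((g j k : X i j))) (a₂ := 0)
          (by simpa [PsiMap] using h0.trans (by simp [PsiMap]))
        funext j k
        exact Subtype.ext (congrFun (congrFun this j) k)
      have := LinearMap.finrank_le_finrank_of_injective hGinj
      rw [Module.finrank_pi_fintype K] at this
      refine le_trans (le_of_eq ?_) this
      refine Finset.sum_congr rfl fun j _ => ?_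
      rw [Module.finrank_pi_fintype K, Finset.sum_const, Finset.card_univ, Fintype.card_fin,
        smul_eq_mul]
    have h2 : ∀ i, (∑ j, (w i j : ℤ) * (finrank K (Y i j) : ℤ)) ≤ (finrank K Y0 : ℤ) := by
      intro i
      have := hineq i
      have : ((∑ j, w i j * finrank K (Y i j) : ℕ) : ℤ) ≤ (finrank K Y0 : ℤ) := by
        exact_mod_cast this
      push_cast at this
      exact this
    have : (∑ i, ∑ j, (w i j : ℤ) * (finrank K (Y i j) : ℤ)) ≤ (m : ℤ) * (finrank K Y0 : ℤ) := by
      calc (∑ i, ∑ j, (w i j : ℤ) * (finrank K (Y i j) : ℤ))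
          ≤ ∑ _i : Fin m, (finrank K Y0 : ℤ) := Finset.sum_le_sum fun i _ => h2 i
        _ = (m : ℤ) * (finrank K Y0 : ℤ) := by
            rw [Finset.sum_const, Finset.card_univ, Fintype.card_fin, nsmul_eq_mul]
    linarith
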